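/- Let D be a digraph in which every nonempty proper subset X of V(D) satisfies d⁺(X) ≥ t(t−1) (i.e., D is strongly t(t−1)-edge-connected) and |V(D)| ≥ t. Then for any t distinct vertices v₁,…,v_t of D, there exists a family of pairwise edge-disjoint directed paths containing, for each ordered pair (i,j) with i ≠ j, a directed path from vᵢ to vⱼ. Consequently D contains an immersion of the complete digraph on t vertices. -/

import Mathlib

/-- A multidigraph on vertex type `V` with edge type `E`. -/
structure MDG (V : Type) (E : Type) where
  tail : E → V
  head : E → V

namespace MDG

variable {V E : Type}

/-- A directed walk from `u` to `w`, given as the list of its edges. -/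
inductive IsWalk (D : MDG V E) : V → V → List E → Prop
  | nil (v : V) : IsWalk D v v []
  | cons {u w : V} {e : E} {p : List E} :
      D.tail e = u → IsWalk D (D.head e) w p → IsWalk D u w (e :: p)

/-- Out-degree of a vertex. -/
def outDeg (D : MDG V E) [Fintype E] [DecidableEq V] (v : V) : ℕ :=
  (Finset.univ.filter fun e => D.tail e = v).card

/-- In-degree of a vertex. -/
def inDeg (D : MDG V E) [Fintype E] [DecidableEq V] (v : V) : ℕ :=
  (Finset.univ.filter fun e => D.head e = v).card

/-- Eulerian: in-degree equals out-degree at every vertex. -/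
def Eulerian (D : MDG V E) [Fintype E] [DecidableEq V] : Prop :=
  ∀ v, D.outDeg v = D.inDeg v

/-- Simple: no loops, and at most one edge per ordered pair of vertices. -/
def Simple (D : MDG V E) : Prop :=
  (∀ e, D.tail e ≠ D.head e) ∧
  ∀ e e', D.tail e = D.tail e' → D.head e = D.head e' → e = e'

/-- `d⁺(X)`: number of edges from `X` to its complement. -/
def cutOut (D : MDG V E) [Fintype E] [DecidableEq V] (X : Finset V) : ℕ :=
  (Finset.univ.filter fun e => D.tail e ∈ X ∧ D.head e ∉ X).card

/-- `d⁻(X)`: number of edges from the complement of `X` into `X`. -/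
def cutIn (D : MDG V E) [Fintype E] [DecidableEq V] (X : Finset V) : ℕ :=
  (Finset.univ.filter fun e => D.head e ∈ X ∧ D.tail e ∉ X).card

/-- `d(X) = d⁺(X) + d⁻(X)`. -/
def cut (D : MDG V E) [Fintype E] [DecidableEq V] (X : Finset V) : ℕ :=
  D.cutOut X + D.cutIn X

/-- Adjacency: there is an edge from `a` to `b`. -/
def Adj (D : MDG V E) (a b : V) : Prop :=
  ∃ e, D.tail e = a ∧ D.head e = b

/-- Immersion of the complete digraph `K⃗_t`: an injection `φ : Fin t → V` together with
pairwise edge-disjoint directed trails, one from `φ i` to `φ j` for each ordered pair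
`i ≠ j`. -/
def ImmerseK (D : MDG V E) (t : ℕ) : Prop :=
  ∃ φ : Fin t → V, Function.Injective φ ∧
    ∃ P : Fin t → Fin t → List E,
      (∀ i j : Fin t, i ≠ j → D.IsWalk (φ i) (φ j) (P i j) ∧ (P i j).Nodup) ∧
      ∀ i j i' j' : Fin t, (i, j) ≠ (i', j') → ∀ e, e ∈ P i j → e ∉ P i' j'

/-- Immersion of a multidigraph `F` in `D`: an injection of the vertices together with
pairwise edge-disjoint directed trails realizing the edges of `F`. -/
def Immerse (D : MDG V E) {n m : ℕ} (F : MDG (Fin n) (Fin m)) : Prop :=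
  ∃ φ : Fin n → V, Function.Injective φ ∧
    ∃ P : Fin m → List E,
      (∀ f, D.IsWalk (φ (F.tail f)) (φ (F.head f)) (P f) ∧ (P f).Nodup) ∧
      ∀ f f', f ≠ f' → ∀ e, e ∈ P f → e ∉ P f'

end MDG

set_option linter.unusedSectionVars false

namespace MDG

variable {V E : Type} [Fintype V] [DecidableEq V] [Fintype E] [DecidableEq E] (D : MDG V E)

def din (A : Finset E) (X : Finset V) : ℕ :=
  (A.filter fun e => D.head e ∈ X ∧ D.tail e ∉ X).card

lemma isWalk_append {u v w : V} {p q : List E} (h1 : D.IsWalk u v p) (h2 : D.IsWalk v w q) :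
    D.IsWalk u w (p ++ q) := by
  induction h1 with
  | nil => simpa
  | cons ht _ ih => exact .cons ht (ih h2)

lemma din_submod (B : Finset E) (X Y : Finset V) :
    din D B (X ∪ Y) + din D B (X ∩ Y) ≤ din D B X + din D B Y := by
  simp only [din, Finset.card_filter]
  rw [← Finset.sum_add_distrib, ← Finset.sum_add_distrib]
  refine Finset.sum_le_sum fun e _ => ?_
  by_cases h1 : D.head e ∈ X <;> by_cases h2 : D.head e ∈ Y <;>
    by_cases h3 : D.tail e ∈ X <;> by_cases h4 : D.tail e ∈ Y <;>
    simp [Finset.mem_union, Finset.mem_inter, h1, h2, h3, h4]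


lemma exists_safe_edge (A F : Finset E) (S : Finset V) (r : V) (q : Finset V → ℕ)
    (hmod : ∀ X Y, q (X ∪ Y) + q (X ∩ Y) = q X + q Y)
    (hanti : ∀ X Y : Finset V, X ⊆ Y → q Y ≤ q X)
    (hSne : S ≠ Finset.univ) (hr : r ∈ S)
    (hF : ∀ e ∈ F, D.head e ∈ S)
    (hA1 : ∀ X : Finset V, X.Nonempty → r ∉ X → q X + 1 ≤ din D A X)
    (hinv : ∀ X : Finset V, X.Nonempty → q X ≤ din D (A \ F) X) :
    ∃ e ∈ A \ F, D.tail e ∈ S ∧ D.head e ∉ S ∧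
      ∀ X : Finset V, X.Nonempty → D.head e ∈ X → D.tail e ∉ X →
        q X + 1 ≤ din D (A \ F) X := by
  classical
  set B := A \ F with hB
  have fact0 : ∀ X : Finset V, X.Nonempty → (∀ x ∈ X, x ∉ S) → q X + 1 ≤ din D B X := by
    intro X hXne hXS
    have hr' : r ∉ X := fun h => hXS r h hr
    have heq : din D B X = din D A X := by
      unfold din
      congr 1
      apply Finset.Subset.antisymm
      · exact Finset.filter_subset_filter _ Finset.sdiff_subset
      · intro f hf
        rw [Finset.mem_filter] at hf ⊢
        refine ⟨Finset.mem_sdiff.mpr ⟨hf.1, fun hfF => ?_⟩, hf.2⟩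
        exact hXS _ hf.2.1 (hF f hfF)
    rw [heq]; exact hA1 X hXne hr'
  set 𝒯 : Finset (Finset V) :=
    Finset.univ.filter (fun X => X.Nonempty ∧ din D B X = q X ∧ (X \ S).Nonempty) with h𝒯
  by_cases hT : 𝒯.Nonempty
  · obtain ⟨T, hTmem, hTmin⟩ := Finset.exists_min_image 𝒯 Finset.card hT
    rw [h𝒯, Finset.mem_filter] at hTmem
    obtain ⟨-, hTne, hTtight, hTS⟩ := hTmem
    have f0 := fact0 (T \ S) hTS (fun x hx => (Finset.mem_sdiff.mp hx).2)
    have hq1 : q T ≤ q (T \ S) := hanti _ _ Finset.sdiff_subset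
    set C1 := B.filter (fun f => D.head f ∈ T \ S ∧ D.tail f ∉ T \ S) with hC1
    have hC1card : q T + 1 ≤ C1.card := le_trans (by omega) f0
    have hsub2 : C1.filter (fun f => D.tail f ∉ T) ⊆
        B.filter (fun f => D.head f ∈ T ∧ D.tail f ∉ T) := by
      intro f hf
      simp only [hC1, Finset.mem_filter, Finset.mem_sdiff] at hf ⊢
      exact ⟨hf.1.1, hf.1.2.1.1, hf.2⟩
    have h2 : (C1.filter (fun f => D.tail f ∉ T)).card ≤ q T :=
      le_trans (Finset.card_le_card hsub2) (le_of_eq hTtight)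
    have hns : ¬ C1 ⊆ C1.filter (fun f => D.tail f ∉ T) := by
      intro hs
      have := Finset.card_le_card hs
      omega
    obtain ⟨f, hfC1, hfnot⟩ := Finset.not_subset.mp hns
    have hfB : f ∈ B := (Finset.mem_filter.mp hfC1).1
    have hfhead : D.head f ∈ T \ S := (Finset.mem_filter.mp hfC1).2.1
    have hftailT : D.tail f ∈ T := by
      by_contra h
      exact hfnot (Finset.mem_filter.mpr ⟨hfC1, h⟩)
    have hftailS : D.tail f ∈ S := by
      have h3 := (Finset.mem_filter.mp hfC1).2.2
      rw [Finset.mem_sdiff] at h3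
      tauto
    refine ⟨f, hfB, hftailS, (Finset.mem_sdiff.mp hfhead).2, ?_⟩
    intro X hXne hXhead hXtail
    by_contra hcon
    push_neg at hcon
    have hXtight : din D B X = q X := le_antisymm (by omega) (hinv X hXne)
    have hUnion : q (T ∪ X) ≤ din D B (T ∪ X) :=
      hinv _ (hTne.mono Finset.subset_union_left)
    have hInterNe : (T ∩ X).Nonempty :=
      ⟨D.head f, Finset.mem_inter.mpr ⟨(Finset.mem_sdiff.mp hfhead).1, hXhead⟩⟩
    have hInter : q (T ∩ X) ≤ din D B (T ∩ X) := hinv _ hInterNe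
    have hsubm := din_submod D B T X
    have hm := hmod T X
    have hItight : din D B (T ∩ X) = q (T ∩ X) := by omega
    have hmemT : T ∩ X ∈ 𝒯 := by
      rw [h𝒯, Finset.mem_filter]
      exact ⟨Finset.mem_univ _, hInterNe, hItight,
        ⟨D.head f, Finset.mem_sdiff.mpr ⟨Finset.mem_inter.mpr
          ⟨(Finset.mem_sdiff.mp hfhead).1, hXhead⟩, (Finset.mem_sdiff.mp hfhead).2⟩⟩⟩
    have hlt : (T ∩ X).card < T.card := by
      apply Finset.card_lt_card
      constructor
      · exact Finset.inter_subset_left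
      · intro hsub
        exact hXtail (Finset.mem_inter.mp (hsub hftailT)).2
    have := hTmin _ hmemT
    omega
  · have hSc : (Finset.univ \ S).Nonempty := by
      rw [Finset.sdiff_nonempty]
      exact fun h => hSne (Finset.univ_subset_iff.mp h)
    have h1 := fact0 _ hSc (fun x hx => (Finset.mem_sdiff.mp hx).2)
    have hne : (B.filter (fun e => D.head e ∈ Finset.univ \ S ∧
        D.tail e ∉ Finset.univ \ S)).Nonempty := by
      rw [← Finset.card_pos]
      unfold din at h1
      omega
    obtain ⟨e, he⟩ := hne
    rw [Finset.mem_filter] at he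
    have hheadS : D.head e ∉ S := (Finset.mem_sdiff.mp he.2.1).2
    have htailS : D.tail e ∈ S := by
      have h3 := he.2.2
      simp [Finset.mem_sdiff] at h3
      exact h3
    refine ⟨e, he.1, htailS, hheadS, ?_⟩
    intro X hXne hXh _
    have hle := hinv X hXne
    rcases eq_or_lt_of_le hle with heq | hlt
    · exfalso
      apply hT
      refine ⟨X, ?_⟩
      rw [h𝒯, Finset.mem_filter]
      exact ⟨Finset.mem_univ _, hXne, heq.symm, ⟨D.head e, Finset.mem_sdiff.mpr ⟨hXh, hheadS⟩⟩⟩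
    · omega


lemma grow (A : Finset E) (r : V) (q : Finset V → ℕ)
    (hmod : ∀ X Y, q (X ∪ Y) + q (X ∩ Y) = q X + q Y)
    (hanti : ∀ X Y : Finset V, X ⊆ Y → q Y ≤ q X)
    (hA0 : ∀ X : Finset V, X.Nonempty → q X ≤ din D A X)
    (hA1 : ∀ X : Finset V, X.Nonempty → r ∉ X → q X + 1 ≤ din D A X) :
    ∃ F, F ⊆ A ∧ (∀ X : Finset V, X.Nonempty → q X ≤ din D (A \ F) X) ∧
      ∀ w : V, ∃ p : List E, D.IsWalk r w p ∧ p.Nodup ∧ ∀ e ∈ p, e ∈ F := by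
  classical
  suffices h : ∀ n (S : Finset V) (F : Finset E), r ∈ S → F ⊆ A →
      (∀ e ∈ F, D.tail e ∈ S ∧ D.head e ∈ S) →
      (∀ w ∈ S, ∃ p : List E, D.IsWalk r w p ∧ p.Nodup ∧ ∀ e ∈ p, e ∈ F) →
      (∀ X : Finset V, X.Nonempty → q X ≤ din D (A \ F) X) →
      (Finset.univ \ S).card ≤ n →
      ∃ F', F' ⊆ A ∧ (∀ X : Finset V, X.Nonempty → q X ≤ din D (A \ F') X) ∧
        ∀ w : V, ∃ p, D.IsWalk r w p ∧ p.Nodup ∧ ∀ e ∈ p, e ∈ F' by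
    refine h (Finset.univ \ {r}).card {r} ∅ (Finset.mem_singleton_self r)
      (Finset.empty_subset _) (by simp) ?_ (by simpa using hA0) le_rfl
    intro w hw
    rw [Finset.mem_singleton] at hw
    subst hw
    exact ⟨[], IsWalk.nil _, List.nodup_nil, by simp⟩
  intro n
  induction n with
  | zero =>
    intro S F _ hFA _ hreach hinv hcard
    have hS : S = Finset.univ :=
      Finset.univ_subset_iff.mp
        (Finset.sdiff_eq_empty_iff_subset.mp (Finset.card_eq_zero.mp (Nat.le_zero.mp hcard)))
    exact ⟨F, hFA, hinv, fun w => hreach w (by rw [hS]; exact Finset.mem_univ w)⟩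
  | succ n ih =>
    intro S F hrS hFA hFS hreach hinv hcard
    by_cases hS : S = Finset.univ
    · exact ⟨F, hFA, hinv, fun w => hreach w (by rw [hS]; exact Finset.mem_univ w)⟩
    · obtain ⟨e, heB, het, heh, hsafe⟩ :=
        exists_safe_edge D A F S r q hmod hanti hS hrS (fun f hf => (hFS f hf).2) hA1 hinv
      have heA : e ∈ A := (Finset.mem_sdiff.mp heB).1
      have heF : e ∉ F := (Finset.mem_sdiff.mp heB).2
      apply ih (insert (D.head e) S) (insert e F)
      · exact Finset.mem_insert_of_mem hrS
      · exact Finset.insert_subset heA hFA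
      · intro f hf
        rcases Finset.mem_insert.mp hf with rfl | hf
        · exact ⟨Finset.mem_insert_of_mem het, Finset.mem_insert_self _ _⟩
        · exact ⟨Finset.mem_insert_of_mem (hFS f hf).1, Finset.mem_insert_of_mem (hFS f hf).2⟩
      · intro w hw
        rcases Finset.mem_insert.mp hw with rfl | hw
        · obtain ⟨p, hp1, hp2, hp3⟩ := hreach (D.tail e) het
          refine ⟨p ++ [e], D.isWalk_append hp1 (.cons rfl (.nil _)), ?_, ?_⟩
          · rw [List.nodup_append]
            exact ⟨hp2, List.nodup_singleton e, fun a ha b hb => by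
              rw [List.mem_singleton] at hb; subst hb; intro hab; subst hab; exact heF (hp3 _ ha)⟩
          · intro f hf
            rcases List.mem_append.mp hf with hf | hf
            · exact Finset.mem_insert_of_mem (hp3 f hf)
            · rw [List.mem_singleton] at hf; subst hf; exact Finset.mem_insert_self _ _
        · obtain ⟨p, hp1, hp2, hp3⟩ := hreach w hw
          exact ⟨p, hp1, hp2, fun f hf => Finset.mem_insert_of_mem (hp3 f hf)⟩
      · intro X hXne
        have hrw : A \ insert e F = (A \ F).erase e := by
          ext x
          simp only [Finset.mem_sdiff, Finset.mem_erase, Finset.mem_insert]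
          tauto
        rw [hrw]
        unfold din
        have hfe : ((A \ F).erase e).filter (fun f => D.head f ∈ X ∧ D.tail f ∉ X)
            = ((A \ F).filter (fun f => D.head f ∈ X ∧ D.tail f ∉ X)).erase e := by
          ext x
          simp only [Finset.mem_filter, Finset.mem_erase]
          tauto
        rw [hfe]
        by_cases hP : D.head e ∈ X ∧ D.tail e ∉ X
        · rw [Finset.card_erase_of_mem (Finset.mem_filter.mpr ⟨heB, hP⟩)]
          have := hsafe X hXne hP.1 hP.2
          unfold din at this
          omega
        · rw [Finset.erase_eq_of_notMem
              (s := (A \ F).filter (fun f => D.head f ∈ X ∧ D.tail f ∉ X)) (a := e)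
              (fun hm => hP (Finset.mem_filter.mp hm).2)]
          exact hinv X hXne
      · have hrw : Finset.univ \ insert (D.head e) S = (Finset.univ \ S).erase (D.head e) := by
          ext x
          simp only [Finset.mem_sdiff, Finset.mem_erase, Finset.mem_insert]
          tauto
        rw [hrw, Finset.card_erase_of_mem (Finset.mem_sdiff.mpr ⟨Finset.mem_univ _, heh⟩)]
        omega

lemma edmonds : ∀ (k : ℕ) (ρ : Fin k → V) (A : Finset E),
    (∀ X : Finset V, X.Nonempty → (Finset.univ.filter fun i => ρ i ∉ X).card ≤ din D A X) →
    ∃ F : Fin k → Finset E, (∀ i, F i ⊆ A) ∧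
      (∀ i j, i ≠ j → Disjoint (F i) (F j)) ∧
      ∀ i (w : V), ∃ p : List E, D.IsWalk (ρ i) w p ∧ p.Nodup ∧ ∀ e ∈ p, e ∈ F i := by
  intro k
  induction k with
  | zero =>
    intro ρ A _
    exact ⟨fun i => i.elim0, fun i => i.elim0, fun i => i.elim0, fun i => i.elim0⟩
  | succ k ih =>
    intro ρ A hA
    classical
    set q : Finset V → ℕ := fun X => (Finset.univ.filter fun i : Fin k => ρ i.succ ∉ X).card
      with hq
    have hsplit : ∀ X : Finset V,
        (Finset.univ.filter fun i : Fin (k+1) => ρ i ∉ X).card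
          = (if ρ 0 ∉ X then 1 else 0) + q X := by
      intro X
      rw [Finset.card_filter, Fin.sum_univ_succ, hq]
      simp only [Finset.card_filter]
    have hmod : ∀ X Y, q (X ∪ Y) + q (X ∩ Y) = q X + q Y := by
      intro X Y
      simp only [hq, Finset.card_filter]
      rw [← Finset.sum_add_distrib, ← Finset.sum_add_distrib]
      refine Finset.sum_congr rfl fun i _ => ?_
      by_cases h1 : ρ i.succ ∈ X <;> by_cases h2 : ρ i.succ ∈ Y <;>
        simp [Finset.mem_union, Finset.mem_inter, h1, h2]
    have hanti : ∀ X Y : Finset V, X ⊆ Y → q Y ≤ q X := by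
      intro X Y hXY
      apply Finset.card_le_card
      intro i hi
      rw [Finset.mem_filter] at hi ⊢
      exact ⟨hi.1, fun h => hi.2 (hXY h)⟩
    obtain ⟨F0, hF0A, hF0inv, hF0reach⟩ := grow D A (ρ 0) q hmod hanti
      (fun X hX => by
        have := hA X hX
        rw [hsplit X] at this
        exact le_trans (Nat.le_add_left _ _) this)
      (fun X hX hr => by
        have := hA X hX
        rw [hsplit X, if_pos hr] at this
        omega)
    obtain ⟨F', hF'A, hF'disj, hF'reach⟩ := ih (fun i => ρ i.succ) (A \ F0) hF0inv
    set FF : Fin (k+1) → Finset E := fun i => if h : i = 0 then F0 else F' (i.pred h) with hFF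
    have hFF0 : FF 0 = F0 := by simp only [hFF, dif_pos rfl]
    have hFFs : ∀ (i : Fin (k+1)) (h : i ≠ 0), FF i = F' (i.pred h) := by
      intro i h
      simp only [hFF, dif_neg h]
    refine ⟨FF, ?_, ?_, ?_⟩
    · intro i
      by_cases h : i = 0
      · rw [h, hFF0]; exact hF0A
      · rw [hFFs i h]; exact (hF'A _).trans Finset.sdiff_subset
    · intro i j hij
      by_cases h1 : i = 0 <;> by_cases h2 : j = 0
      · exact absurd (h1.trans h2.symm) hij
      · rw [h1, hFF0, hFFs j h2, Finset.disjoint_left]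
        intro a ha haj
        exact (Finset.mem_sdiff.mp (hF'A _ haj)).2 ha
      · rw [hFFs i h1, h2, hFF0, Finset.disjoint_left]
        intro a hai ha0
        exact (Finset.mem_sdiff.mp (hF'A _ hai)).2 ha0
      · rw [hFFs i h1, hFFs j h2]
        refine hF'disj _ _ (fun hpp => hij ?_)
        rw [← Fin.succ_pred i h1, ← Fin.succ_pred j h2, hpp]
    · intro i w
      by_cases h : i = 0
      · subst h
        rw [hFF0]
        exact hF0reach w
      · rw [hFFs i h]
        have := hF'reach (i.pred h) w
        rwa [Fin.succ_pred] at this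


end MDG

/-- If `D` is strongly `t(t-1)`-edge-connected with at least `t` vertices, then for any
`t` distinct vertices there is a family of pairwise edge-disjoint directed trails, one from
`vᵢ` to `vⱼ` for each ordered pair `i ≠ j`; consequently `D` immerses `K⃗_t`. -/

theorem edmonds_corollary {V E : Type} [Fintype V] [Fintype E] [DecidableEq V]
    (t : ℕ) (D : MDG V E)
    (hconn : ∀ X : Finset V, X.Nonempty → X ≠ Finset.univ → t * (t - 1) ≤ D.cutOut X)
    (hcard : t ≤ Fintype.card V)
    (v : Fin t → V) (hv : Function.Injective v) :
    (∃ P : Fin t → Fin t → List E,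
      (∀ i j : Fin t, i ≠ j → D.IsWalk (v i) (v j) (P i j) ∧ (P i j).Nodup) ∧
      ∀ i j i' j' : Fin t, (i, j) ≠ (i', j') → ∀ e, e ∈ P i j → e ∉ P i' j') ∧
    D.ImmerseK t := by
  classical
  have hcardsub : Fintype.card {p : Fin t × Fin t // p.1 ≠ p.2} = t * (t - 1) := by
    rw [Fintype.card_subtype]
    have hdiag : (Finset.univ.filter fun p : Fin t × Fin t => p.1 = p.2).card = t := by
      rw [Finset.card_filter, Fintype.sum_prod_type]
      simp [Finset.sum_ite_eq]
    have h1 := Finset.card_filter_add_card_filter_not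
      (s := (Finset.univ : Finset (Fin t × Fin t))) (p := fun p => p.1 = p.2)
    have h2 : (Finset.univ : Finset (Fin t × Fin t)).card = t * t := by
      simp [Finset.card_univ]
    have h3 : t * (t - 1) = t * t - t := by
      cases t with
      | zero => simp
      | succ n =>
        have h4 : (n+1) * (n+1) = (n+1) * n + (n+1) := Nat.mul_succ _ _
        simp only [Nat.succ_sub_one]
        omega
    have h5 : (Finset.univ.filter fun p : Fin t × Fin t => ¬ p.1 = p.2).card
        = (Finset.univ.filter fun p : Fin t × Fin t => p.1 ≠ p.2).card := rfl
    omega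
  let eqv : {p : Fin t × Fin t // p.1 ≠ p.2} ≃ Fin (t * (t-1)) :=
    Fintype.equivFinOfCardEq hcardsub
  set ρ : Fin (t*(t-1)) → V := fun n => v ((eqv.symm n).val.1) with hρ
  have hA : ∀ X : Finset V, X.Nonempty →
      (Finset.univ.filter fun i => ρ i ∉ X).card ≤ MDG.din D Finset.univ X := by
    intro X hX
    by_cases hXu : X = Finset.univ
    · subst hXu
      simp [MDG.din]
    · have hb : (Finset.univ.filter fun i : Fin (t*(t-1)) => ρ i ∉ X).card ≤ t * (t-1) :=
        le_trans (Finset.card_filter_le _ _) (by simp)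
      have h1 := hconn (Finset.univ \ X)
        (by
          rw [Finset.sdiff_nonempty]
          exact fun h => hXu (Finset.univ_subset_iff.mp h))
        (by
          intro h
          obtain ⟨x, hx⟩ := hX
          have hx2 : x ∈ Finset.univ \ X := by rw [h]; exact Finset.mem_univ x
          exact (Finset.mem_sdiff.mp hx2).2 hx)
      have h2 : D.cutOut (Finset.univ \ X) = MDG.din D Finset.univ X := by
        unfold MDG.cutOut MDG.din
        congr 1
        apply Finset.filter_congr
        intro e _
        simp only [Finset.mem_sdiff, Finset.mem_univ, true_and]
        tauto
      omega
  obtain ⟨F, hFA, hFdisj, hFreach⟩ := MDG.edmonds D (t*(t-1)) ρ Finset.univ hA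
  have key : ∀ s : {p : Fin t × Fin t // p.1 ≠ p.2}, ∃ p : List E,
      D.IsWalk (v s.val.1) (v s.val.2) p ∧ p.Nodup ∧ ∀ e ∈ p, e ∈ F (eqv s) := by
    intro s
    have h := hFreach (eqv s) (v s.val.2)
    rwa [show ρ (eqv s) = v s.val.1 from by rw [hρ]; simp] at h
  choose Pf hPf1 hPf2 hPf3 using key
  set P : Fin t → Fin t → List E := fun i j => if h : i = j then [] else Pf ⟨(i,j), h⟩ with hP
  have hgood : ∀ i j : Fin t, i ≠ j → D.IsWalk (v i) (v j) (P i j) ∧ (P i j).Nodup := by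
    intro i j h
    have hPe : P i j = Pf ⟨(i,j), h⟩ := by simp only [hP, dif_neg h]
    rw [hPe]
    exact ⟨hPf1 ⟨(i,j),h⟩, hPf2 _⟩
  have hdisj : ∀ i j i' j' : Fin t, (i,j) ≠ (i',j') → ∀ e, e ∈ P i j → e ∉ P i' j' := by
    intro i j i' j' hne e he he'
    by_cases h1 : i = j
    · rw [show P i j = [] from by simp only [hP, dif_pos h1]] at he
      exact absurd he List.not_mem_nil
    by_cases h2 : i' = j'
    · rw [show P i' j' = [] from by simp only [hP, dif_pos h2]] at he'
      exact absurd he' List.not_mem_nil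
    rw [show P i j = Pf ⟨(i,j), h1⟩ from by simp only [hP, dif_neg h1]] at he
    rw [show P i' j' = Pf ⟨(i',j'), h2⟩ from by simp only [hP, dif_neg h2]] at he'
    have hss : (⟨(i,j),h1⟩ : {p : Fin t × Fin t // p.1 ≠ p.2}) ≠ ⟨(i',j'),h2⟩ := by
      intro hs
      exact hne (congrArg Subtype.val hs)
    have hidx : eqv ⟨(i,j),h1⟩ ≠ eqv ⟨(i',j'),h2⟩ := fun h => hss (eqv.injective h)
    exact (Finset.disjoint_left.mp (hFdisj _ _ hidx) (hPf3 _ e he)) (hPf3 _ e he')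
  exact ⟨⟨P, hgood, hdisj⟩, ⟨v, hv, P, hgood, hdisj⟩⟩
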